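/- arXiv:2110.12097 — 8 statements merged into one kernel-verified Lean document; each statement's English description precedes it below -/
import Mathlib

section
/- Let ω > 0, let y : ℝ → ℝ be twice differentiable with y''(t) = ω²(y(t) − x_foot) for all t ∈ ℝ, y(0) = x₀, y'(0) = ẋ₀, and suppose A = ((x₀ − x_foot) + ẋ₀/ω)/2 > 0. Then y(t) + y'(t)/ω − x_foot = 2A·e^{ωt} > 0 for all t, and the elapsed time is recovered from the state by t = (1/ω)·log((y(t) + y'(t)/ω − x_foot)/(2A)) for all t ∈ ℝ. -/
/-- If `A > 0`, then along the PIPM trajectory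
`y(t) + y'(t)/ω − x_foot = 2A·e^{ωt} > 0` for all `t`, and the elapsed time is
recovered from the state by `t = (1/ω)·log((y + y'/ω − x_foot)/(2A))`. -/
theorem pipm_time_recovery
    (ω xfoot x0 xdot0 A : ℝ) (hω : 0 < ω)
    (hA : A = ((x0 - xfoot) + xdot0 / ω) / 2) (hApos : 0 < A)
    (y : ℝ → ℝ)
    (hdiff : ∀ t, DifferentiableAt ℝ y t)
    (hdiff' : ∀ t, DifferentiableAt ℝ (deriv y) t)
    (hode : ∀ t, deriv (deriv y) t = ω ^ 2 * (y t - xfoot))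
    (h0 : y 0 = x0) (h0' : deriv y 0 = xdot0) :
    ∀ t : ℝ,
      y t + deriv y t / ω - xfoot = 2 * A * Real.exp (ω * t) ∧
      0 < y t + deriv y t / ω - xfoot ∧
      t = (1 / ω) * Real.log ((y t + deriv y t / ω - xfoot) / (2 * A)) := by
  have hω0 : ω ≠ 0 := ne_of_gt hω
  set h : ℝ → ℝ := fun t => y t + deriv y t / ω - xfoot with hh
  have hhd : ∀ t, HasDerivAt h (ω * h t) t := by
    intro t
    have h1 := (hdiff t).hasDerivAt
    have h2 := (hdiff' t).hasDerivAt
    have hd : HasDerivAt h (deriv y t + deriv (deriv y) t / ω) t :=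
      (h1.add (h2.div_const ω)).sub_const xfoot
    convert hd using 1
    rw [hode t]
    simp only [hh]
    field_simp
    ring
  have hg : ∀ t, HasDerivAt (fun t => h t * Real.exp (-ω * t)) 0 t := by
    intro t
    have he : HasDerivAt (fun t : ℝ => Real.exp (-ω * t)) (Real.exp (-ω * t) * (-ω)) t := by
      have := ((hasDerivAt_id t).const_mul (-ω)).exp
      simpa using this
    have : HasDerivAt (fun t => h t * Real.exp (-ω * t)) (ω * h t * Real.exp (-ω * t) + h t * (Real.exp (-ω * t) * -ω)) t := (hhd t).mul he
    convert this using 1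
    ring
  have hconst : ∀ t, h t * Real.exp (-ω * t) = h 0 := by
    intro t
    have := is_const_of_deriv_eq_zero (f := fun t => h t * Real.exp (-ω * t))
      (fun x => (hg x).differentiableAt) (fun x => (hg x).deriv) t 0
    simpa using this
  have h0eq : h 0 = 2 * A := by
    simp only [hh, h0, h0', hA]
    ring
  have key : ∀ t, h t = 2 * A * Real.exp (ω * t) := by
    intro t
    have := hconst t
    rw [h0eq] at this
    have hexp : Real.exp (-ω * t) * Real.exp (ω * t) = 1 := by
      rw [← Real.exp_add]; simp
    calc h t = h t * Real.exp (-ω * t) * Real.exp (ω * t) := by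
          rw [mul_assoc, hexp, mul_one]
      _ = 2 * A * Real.exp (ω * t) := by rw [this]
  intro t
  have hk := key t
  have hpos : 0 < h t := by
    rw [hk]; positivity
  have hk' : y t + deriv y t / ω - xfoot = 2 * A * Real.exp (ω * t) := hk
  refine ⟨hk', hk' ▸ (by positivity : (0:ℝ) < 2 * A * Real.exp (ω * t)), ?_⟩
  rw [hk']
  have h2A : (2 : ℝ) * A ≠ 0 := by positivity
  have : 2 * A * Real.exp (ω * t) / (2 * A) = Real.exp (ω * t) := by
    field_simp
  rw [this, Real.log_exp]
  field_simp
end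

section
/- Let ω > 0, let y : ℝ → ℝ be twice differentiable with y''(t) = ω²(y(t) − x_foot) for all t ∈ ℝ, y(0) = x₀, y'(0) = ẋ₀, and suppose A = ((x₀ − x_foot) + ẋ₀/ω)/2 > 0 and B = ((x₀ − x_foot) − ẋ₀/ω)/2 > 0. Then t* = log(B/A)/(2ω) is the unique time at which y'(t*) = 0; moreover y(t*) = x_foot + 2√(AB), y'(t) < 0 for t < t*, y'(t) > 0 for t > t*, and y attains its global minimum value x_foot + 2√(AB) at t*. -/
private lemma pipm_amgm_aux (a b s : ℝ) (ha : 0 < a) (hb : 0 < b) (hs : 0 ≤ s)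
    (h : s ^ 2 = a * b) : 2 * s ≤ a + b := by
  nlinarith [sq_nonneg (a - b), sq_nonneg (a + b - 2 * s)]

/-- If `A > 0` and `B > 0`, then `t* = log(B/A)/(2ω)` is the
unique time at which the PIPM velocity vanishes; moreover
`y(t*) = x_foot + 2√(AB)`, the velocity is negative before `t*` and positive
after `t*`, and `y` attains its global minimum `x_foot + 2√(AB)` at `t*`. -/
theorem pipm_apex_time_unique
    (ω xfoot x0 xdot0 A B : ℝ) (hω : 0 < ω)
    (hA : A = ((x0 - xfoot) + xdot0 / ω) / 2)
    (hB : B = ((x0 - xfoot) - xdot0 / ω) / 2)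
    (hApos : 0 < A) (hBpos : 0 < B)
    (y : ℝ → ℝ)
    (hdiff : ∀ t, DifferentiableAt ℝ y t)
    (hdiff' : ∀ t, DifferentiableAt ℝ (deriv y) t)
    (hode : ∀ t, deriv (deriv y) t = ω ^ 2 * (y t - xfoot))
    (h0 : y 0 = x0) (h0' : deriv y 0 = xdot0)
    (tstar : ℝ) (htstar : tstar = Real.log (B / A) / (2 * ω)) :
    deriv y tstar = 0 ∧
    (∀ t : ℝ, deriv y t = 0 → t = tstar) ∧
    y tstar = xfoot + 2 * Real.sqrt (A * B) ∧
    (∀ t : ℝ, t < tstar → deriv y t < 0) ∧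
    (∀ t : ℝ, tstar < t → 0 < deriv y t) ∧
    (∀ t : ℝ, xfoot + 2 * Real.sqrt (A * B) ≤ y t) := by
  have hω' : ω ≠ 0 := ne_of_gt hω
  have hAB : A + B = x0 - xfoot := by rw [hA, hB]; ring
  have hAB' : ω * (A - B) = xdot0 := by
    rw [hA, hB]; field_simp; ring
  -- second derivative as HasDerivAt
  have hy : ∀ t, HasDerivAt y (deriv y t) t := fun t => (hdiff t).hasDerivAt
  have hy' : ∀ t, HasDerivAt (deriv y) (ω ^ 2 * (y t - xfoot)) t := fun t => by
    have := (hdiff' t).hasDerivAt; rwa [hode t] at this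
  -- u and v
  set u : ℝ → ℝ := fun t => (deriv y t - ω * (y t - xfoot)) * Real.exp (ω * t) with hu
  set v : ℝ → ℝ := fun t => (deriv y t + ω * (y t - xfoot)) * Real.exp (-(ω * t)) with hv
  have hexp : ∀ t : ℝ, HasDerivAt (fun s => Real.exp (ω * s)) (ω * Real.exp (ω * t)) t := by
    intro t
    exact ((Real.hasDerivAt_exp (ω * t)).comp t ((hasDerivAt_id t).const_mul ω)).congr_deriv (by ring)
  have hexp' : ∀ t : ℝ, HasDerivAt (fun s => Real.exp (-(ω * s))) (-ω * Real.exp (-(ω * t))) t := by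
    intro t
    have := (Real.hasDerivAt_exp (-(ω * t))).comp t (((hasDerivAt_id t).const_mul ω).neg)
    exact this.congr_deriv (by ring)
  have hud : ∀ t, HasDerivAt u 0 t := by
    intro t
    have h2 : HasDerivAt (fun s => deriv y s - ω * (y s - xfoot))
        (ω ^ 2 * (y t - xfoot) - ω * deriv y t) t :=
      (hy' t).sub (((hy t).sub_const xfoot).const_mul ω)
    have := h2.mul (hexp t)
    exact this.congr_deriv (by ring)
  have hvd : ∀ t, HasDerivAt v 0 t := by
    intro t
    have h2 : HasDerivAt (fun s => deriv y s + ω * (y s - xfoot))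
        (ω ^ 2 * (y t - xfoot) + ω * deriv y t) t :=
      (hy' t).add (((hy t).sub_const xfoot).const_mul ω)
    have := h2.mul (hexp' t)
    exact this.congr_deriv (by ring)
  have huc : ∀ t, u t = u 0 := fun t =>
    is_const_of_deriv_eq_zero (fun s => (hud s).differentiableAt)
      (fun s => (hud s).deriv) t 0
  have hvc : ∀ t, v t = v 0 := fun t =>
    is_const_of_deriv_eq_zero (fun s => (hvd s).differentiableAt)
      (fun s => (hvd s).deriv) t 0
  have hu0 : u 0 = -(2 * ω * B) := by
    simp only [hu, mul_zero, Real.exp_zero, mul_one, h0, h0']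
    nlinarith [hAB, hAB']
  have hv0 : v 0 = 2 * ω * A := by
    simp only [hv, neg_zero, mul_zero, Real.exp_zero, mul_one, h0, h0']
    nlinarith [hAB, hAB']
  have hinv : ∀ t : ℝ, Real.exp (ω * t) * Real.exp (-(ω * t)) = 1 := by
    intro t; rw [← Real.exp_add]; simp
  have hinv' : ∀ t : ℝ, Real.exp (-(ω * t)) * Real.exp (ω * t) = 1 := by
    intro t; rw [← Real.exp_add]; simp
  have hepos : ∀ t : ℝ, 0 < Real.exp (ω * t) := fun t => Real.exp_pos _
  -- explicit formulas
  have hderiv : ∀ t, deriv y t = ω * A * Real.exp (ω * t) - ω * B * Real.exp (-(ω * t)) := by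
    intro t
    have h1 := huc t; rw [hu0] at h1
    have h2 := hvc t; rw [hv0] at h2
    simp only [hu, hv] at h1 h2
    have e1 : deriv y t - ω * (y t - xfoot) = -(2 * ω * B) * Real.exp (-(ω * t)) := by
      have h3 := congrArg (fun x => x * Real.exp (-(ω * t))) h1
      simpa [mul_assoc, hinv t] using h3
    have e2 : deriv y t + ω * (y t - xfoot) = 2 * ω * A * Real.exp (ω * t) := by
      have h3 := congrArg (fun x => x * Real.exp (ω * t)) h2
      simpa [mul_assoc, hinv' t] using h3
    linarith
  have hyval : ∀ t, y t = xfoot + A * Real.exp (ω * t) + B * Real.exp (-(ω * t)) := by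
    intro t
    have h1 := huc t; rw [hu0] at h1
    have h2 := hvc t; rw [hv0] at h2
    simp only [hu, hv] at h1 h2
    have e1 : deriv y t - ω * (y t - xfoot) = -(2 * ω * B) * Real.exp (-(ω * t)) := by
      have h3 := congrArg (fun x => x * Real.exp (-(ω * t))) h1
      simpa [mul_assoc, hinv t] using h3
    have e2 : deriv y t + ω * (y t - xfoot) = 2 * ω * A * Real.exp (ω * t) := by
      have h3 := congrArg (fun x => x * Real.exp (ω * t)) h2
      simpa [mul_assoc, hinv' t] using h3
    have : ω * (y t - xfoot) = ω * (A * Real.exp (ω * t) + B * Real.exp (-(ω * t))) := by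
      linarith
    have := mul_left_cancel₀ hω' this
    linarith
  -- value of exp at tstar
  have hBA : (0:ℝ) < B / A := div_pos hBpos hApos
  have hsA : 0 < Real.sqrt A := Real.sqrt_pos.mpr hApos
  have hsB : 0 < Real.sqrt B := Real.sqrt_pos.mpr hBpos
  have hEt : Real.exp (ω * tstar) = Real.sqrt B / Real.sqrt A := by
    have h : ω * tstar = Real.log (B / A) / 2 := by rw [htstar]; field_simp
    rw [h, Real.exp_half, Real.exp_log hBA, Real.sqrt_div hBpos.le]
  have hEt' : Real.exp (-(ω * tstar)) = Real.sqrt A / Real.sqrt B := by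
    rw [Real.exp_neg, hEt, inv_div]
  have hsab : Real.sqrt (A * B) = Real.sqrt A * Real.sqrt B := Real.sqrt_mul hApos.le B
  have key1 : A * Real.exp (ω * tstar) = Real.sqrt (A * B) := by
    rw [hEt, hsab]
    field_simp
    linear_combination -(Real.mul_self_sqrt hApos.le)
  have key2 : B * Real.exp (-(ω * tstar)) = Real.sqrt (A * B) := by
    rw [hEt', hsab]
    field_simp
    linear_combination -(Real.mul_self_sqrt hBpos.le)
  have hzero : deriv y tstar = 0 := by
    rw [hderiv]
    linear_combination ω * key1 - ω * key2
  have hmono : ∀ s t : ℝ, s < t → deriv y s < deriv y t := by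
    intro s t hst
    rw [hderiv s, hderiv t]
    have h1 : Real.exp (ω * s) < Real.exp (ω * t) :=
      Real.exp_lt_exp.mpr (by nlinarith)
    have h2 : Real.exp (-(ω * t)) < Real.exp (-(ω * s)) :=
      Real.exp_lt_exp.mpr (by nlinarith)
    nlinarith [mul_lt_mul_of_pos_left h1 (mul_pos hω hApos),
      mul_lt_mul_of_pos_left h2 (mul_pos hω hBpos)]
  have hneg : ∀ t : ℝ, t < tstar → deriv y t < 0 := fun t ht => by
    have := hmono t tstar ht; linarith [hzero]
  have hpos : ∀ t : ℝ, tstar < t → 0 < deriv y t := fun t ht => by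
    have := hmono tstar t ht; linarith [hzero]
  refine ⟨hzero, ?_, ?_, hneg, hpos, ?_⟩
  · intro t ht
    rcases lt_trichotomy t tstar with h | h | h
    · exact absurd ht (ne_of_lt (hneg t h))
    · exact h
    · exact absurd ht (ne_of_gt (hpos t h))
  · rw [hyval]
    linear_combination key1 + key2
  · intro t
    rw [hyval]
    have hab : (A * Real.exp (ω * t)) * (B * Real.exp (-(ω * t))) = A * B := by
      linear_combination (A * B) * hinv t
    have ha : 0 < A * Real.exp (ω * t) := mul_pos hApos (Real.exp_pos _)
    have hb : 0 < B * Real.exp (-(ω * t)) := mul_pos hBpos (Real.exp_pos _)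
    have hsq : Real.sqrt (A * B) ^ 2 = (A * Real.exp (ω * t)) * (B * Real.exp (-(ω * t))) := by
      rw [Real.sq_sqrt (mul_pos hApos hBpos).le, hab]
    have := pipm_amgm_aux _ _ _ ha hb (Real.sqrt_nonneg (A * B)) hsq
    linarith
end

section
/- Let ω > 0, let y : ℝ → ℝ be twice differentiable with y''(t) = ω²(y(t) − x_foot) for all t ∈ ℝ, y(0) = x₀, y'(0) = ẋ₀, and suppose A = ((x₀ − x_foot) + ẋ₀/ω)/2 > 0 and B = ((x₀ − x_foot) − ẋ₀/ω)/2 < 0. Then the CoM moves forward for all time, i.e. y'(t) > 0 for every t ∈ ℝ, and there is a unique time t* = log(−B/A)/(2ω) at which the CoM crosses the stance foot, i.e. y(t*) = x_foot, and at that crossing y'(t*) = 2ω√(−AB). -/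
lemma pipm_linODE (c : ℝ) (v : ℝ → ℝ)
    (hv : ∀ t, HasDerivAt v (c * v t) t) (h0 : v 0 = 0) : ∀ t, v t = 0 := by
  have key : ∀ s : ℝ, HasDerivAt (fun t => Real.exp (-(c * t)) * v t) 0 s := by
    intro s
    have h1 : HasDerivAt (fun t : ℝ => Real.exp (-(c * t)))
        (Real.exp (-(c * s)) * (-c)) s := by
      have := (((hasDerivAt_id s).const_mul c).neg).exp
      simpa using this
    have h2 := h1.fun_mul (hv s)
    refine h2.congr_deriv ?_
    ring
  have hconst := is_const_of_deriv_eq_zero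
    (f := fun t => Real.exp (-(c * t)) * v t)
    (fun t => (key t).differentiableAt) (fun t => (key t).deriv)
  intro t
  have h := hconst t 0
  simp only [mul_zero, neg_zero, Real.exp_zero, one_mul, h0] at h
  rcases mul_eq_zero.mp h with h | h
  · exact absurd h (ne_of_gt (Real.exp_pos _))
  · exact h

/-- If `A > 0` and `B < 0`, then the CoM moves forward for all
time (`y' > 0`), and `t* = log(−B/A)/(2ω)` is the unique time at which the CoM
crosses the stance foot (`y(t*) = x_foot`), with crossing velocity
`y'(t*) = 2ω√(−AB)`. -/
theorem pipm_forward_crossing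
    (ω xfoot x0 xdot0 A B : ℝ) (hω : 0 < ω)
    (hA : A = ((x0 - xfoot) + xdot0 / ω) / 2)
    (hB : B = ((x0 - xfoot) - xdot0 / ω) / 2)
    (hApos : 0 < A) (hBneg : B < 0)
    (y : ℝ → ℝ)
    (hdiff : ∀ t, DifferentiableAt ℝ y t)
    (hdiff' : ∀ t, DifferentiableAt ℝ (deriv y) t)
    (hode : ∀ t, deriv (deriv y) t = ω ^ 2 * (y t - xfoot))
    (h0 : y 0 = x0) (h0' : deriv y 0 = xdot0)
    (tstar : ℝ) (htstar : tstar = Real.log (-B / A) / (2 * ω)) :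
    (∀ t : ℝ, 0 < deriv y t) ∧
    y tstar = xfoot ∧
    (∀ t : ℝ, y t = xfoot → t = tstar) ∧
    deriv y tstar = 2 * ω * Real.sqrt (-(A * B)) := by
  have hωne : ω ≠ 0 := ne_of_gt hω
  -- basic relations
  have hsum : A + B = x0 - xfoot := by rw [hA, hB]; ring
  have hdiffAB : ω * (A - B) = xdot0 := by
    rw [hA, hB]; field_simp; ring
  -- explicit solution pieces
  set g : ℝ → ℝ := fun t => A * Real.exp (ω * t) + B * Real.exp (-(ω * t)) with hg_def
  set G : ℝ → ℝ := fun t => ω * (A * Real.exp (ω * t) - B * Real.exp (-(ω * t))) with hG_def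
  have hexp1 : ∀ t : ℝ, HasDerivAt (fun t : ℝ => Real.exp (ω * t))
      (Real.exp (ω * t) * ω) t := by
    intro t
    have := ((hasDerivAt_id t).const_mul ω).exp
    simpa using this
  have hexp2 : ∀ t : ℝ, HasDerivAt (fun t : ℝ => Real.exp (-(ω * t)))
      (Real.exp (-(ω * t)) * (-ω)) t := by
    intro t
    have := (((hasDerivAt_id t).const_mul ω).neg).exp
    simpa using this
  have hg : ∀ t, HasDerivAt g (G t) t := by
    intro t
    have := ((hexp1 t).const_mul A).fun_add ((hexp2 t).const_mul B)
    refine this.congr_deriv ?_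
    simp only [hG_def]; ring
  have hG : ∀ t, HasDerivAt G (ω ^ 2 * g t) t := by
    intro t
    have := (((hexp1 t).const_mul A).fun_sub ((hexp2 t).const_mul B)).const_mul ω
    refine this.congr_deriv ?_
    simp only [hg_def]; ring
  -- u = y - xfoot - g
  set u : ℝ → ℝ := fun t => y t - xfoot - g t with hu_def
  have hu : ∀ t, HasDerivAt u (deriv y t - G t) t := by
    intro t
    exact ((hdiff t).hasDerivAt.sub_const xfoot).sub (hg t)
  -- v = y' - G - ω u  satisfies v' = -ω v
  set v : ℝ → ℝ := fun t => deriv y t - G t - ω * u t with hv_def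
  have hv : ∀ t, HasDerivAt v ((-ω) * v t) t := by
    intro t
    have h1 : HasDerivAt (deriv y) (ω ^ 2 * (y t - xfoot)) t := by
      have := (hdiff' t).hasDerivAt
      rwa [hode t] at this
    have h2 := (h1.fun_sub (hG t)).fun_sub ((hu t).const_mul ω)
    refine h2.congr_deriv ?_
    simp only [hv_def, hu_def]; ring
  have hv0 : v 0 = 0 := by
    simp only [hv_def, hu_def, hg_def, hG_def, h0, h0', mul_zero, neg_zero,
      Real.exp_zero, mul_one]
    nlinarith [hsum, hdiffAB]
  have hvzero := pipm_linODE (-ω) v hv hv0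
  -- hence u' = ω u, u 0 = 0, so u ≡ 0
  have hu' : ∀ t, HasDerivAt u (ω * u t) t := by
    intro t
    have hvt := hvzero t
    simp only [hv_def] at hvt
    have heq : deriv y t - G t = ω * u t := by linarith
    exact heq ▸ hu t
  have hu0 : u 0 = 0 := by
    simp only [hu_def, hg_def, h0, mul_zero, neg_zero, Real.exp_zero, mul_one]
    linarith
  have huzero := pipm_linODE ω u hu' hu0
  have hy : ∀ t, y t = xfoot + g t := by
    intro t
    have := huzero t
    simp only [hu_def] at this
    linarith
  have hy' : ∀ t, deriv y t = G t := by
    intro t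
    have h1 := hvzero t
    have h2 := huzero t
    simp only [hv_def] at h1
    rw [h2, mul_zero] at h1
    linarith
  have hpos : ∀ t : ℝ, 0 < deriv y t := by
    intro t
    rw [hy']
    simp only [hG_def]
    have e1 := Real.exp_pos (ω * t)
    have e2 := Real.exp_pos (-(ω * t))
    have : 0 < A * Real.exp (ω * t) - B * Real.exp (-(ω * t)) := by nlinarith
    positivity
  -- the crossing point
  set s : ℝ := Real.exp (ω * tstar) with hs_def
  have hspos : 0 < s := Real.exp_pos _
  have hsne : s ≠ 0 := ne_of_gt hspos
  have hBApos : 0 < -B / A := div_pos (by linarith) hApos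
  have hs2 : s ^ 2 = -B / A := by
    have h2 : s ^ 2 = Real.exp (2 * (ω * tstar)) := by
      rw [two_mul, Real.exp_add]; ring
    rw [h2, htstar]
    have h3 : 2 * (ω * (Real.log (-B / A) / (2 * ω))) = Real.log (-B / A) := by
      field_simp
    rw [h3, Real.exp_log hBApos]
  have hAs2 : A * s ^ 2 = -B := by
    rw [hs2]; field_simp
  have hsinv : Real.exp (-(ω * tstar)) = s⁻¹ := by
    rw [Real.exp_neg]
  have hgstar : g tstar = 0 := by
    simp only [hg_def, hsinv, ← hs_def]
    have hk : (A * s + B * s⁻¹) * s = 0 := by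
      have h4 : (A * s + B * s⁻¹) * s = A * s ^ 2 + B := by
        field_simp
      rw [h4, hAs2]; ring
    rcases mul_eq_zero.mp hk with h | h
    · exact h
    · exact absurd h hsne
  have hcross : y tstar = xfoot := by rw [hy, hgstar, add_zero]
  -- uniqueness
  have huniq : ∀ t : ℝ, y t = xfoot → t = tstar := by
    intro t ht
    have hgt : g t = 0 := by
      have := hy t; rw [ht] at this; linarith
    set r : ℝ := Real.exp (ω * t) with hr_def
    have hrpos : 0 < r := Real.exp_pos _
    have hrne : r ≠ 0 := ne_of_gt hrpos
    have hrinv : Real.exp (-(ω * t)) = r⁻¹ := Real.exp_neg _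
    simp only [hg_def, hrinv, ← hr_def] at hgt
    have hr2 : A * r ^ 2 = -B := by
      have h4 : A * r ^ 2 + B = (A * r + B * r⁻¹) * r := by
        field_simp
      rw [hgt, zero_mul] at h4
      linarith
    have hrs : r = s := by
      have hsq : r ^ 2 = s ^ 2 := by
        have hAne : A ≠ 0 := ne_of_gt hApos
        have := hr2.trans hAs2.symm
        exact mul_left_cancel₀ hAne this
      have h5 : (r - s) * (r + s) = 0 := by linear_combination hsq
      rcases mul_eq_zero.mp h5 with h | h
      · linarith
      · linarith
    have heq : ω * t = ω * tstar := Real.exp_injective (by rw [← hr_def, ← hs_def, hrs])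
    exact mul_left_cancel₀ hωne heq
  -- crossing velocity
  have hBne : -B ≠ 0 := ne_of_gt (by linarith)
  have hvel : deriv y tstar = 2 * ω * Real.sqrt (-(A * B)) := by
    rw [hy' tstar]
    simp only [hG_def, hsinv, ← hs_def]
    have h1 : Real.sqrt (-(A * B)) = A * s := by
      have hAs : 0 < A * s := mul_pos hApos hspos
      have h6 : -(A * B) = (A * s) ^ 2 := by
        have : (A * s) ^ 2 = A * (A * s ^ 2) := by ring
        rw [this, hAs2]; ring
      rw [h6, Real.sqrt_sq hAs.le]
    have h2 : Real.sqrt (-(A * B)) = -B * s⁻¹ := by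
      have hBs : 0 < -B * s⁻¹ := mul_pos (by linarith) (inv_pos.mpr hspos)
      have hs2' : (s⁻¹) ^ 2 = A / (-B) := by
        rw [inv_pow, hs2, inv_div]
      have h6 : -(A * B) = (-B * s⁻¹) ^ 2 := by
        rw [mul_pow, hs2']; field_simp
      rw [h6, Real.sqrt_sq hBs.le]
    have h7 : A * s - B * s⁻¹ = 2 * Real.sqrt (-(A * B)) := by
      rw [two_mul]
      nth_rewrite 1 [h1]
      nth_rewrite 1 [h2]
      ring
    rw [h7]; ring
  exact ⟨hpos, hcross, huniq, hvel⟩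
end

section
/- Let ω > 0 and suppose x_foot,c < x_foot,n. Let x_switch = (1/2)·(C/(x_foot,n − x_foot,c) + (x_foot,c + x_foot,n)) with C = (x_apex,c − x_foot,c)² − (x_apex,n − x_foot,n)² + (v_apex,n² − v_apex,c²)/ω². Then the switching position lies between the two consecutive apex positions, x_apex,c ≤ x_switch ≤ x_apex,n, if and only if ω²(x_apex,n − x_apex,c)(x_apex,c + x_apex,n − 2x_foot,n) ≤ v_apex,n² − v_apex,c² ≤ ω²(x_apex,n − x_apex,c)(x_apex,c + x_apex,n − 2x_foot,c). -/
/-- The switching position lies between the two consecutive apex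
positions iff the apex velocities satisfy the stated two-sided inequality. -/
theorem switching_between_apexes_iff
    (ω xfc xfn xac xan vac van xswitch C : ℝ) (hω : 0 < ω)
    (hfeet : xfc < xfn)
    (hC : C = (xac - xfc) ^ 2 - (xan - xfn) ^ 2 + (van ^ 2 - vac ^ 2) / ω ^ 2)
    (hswitch : xswitch = (1 / 2) * (C / (xfn - xfc) + (xfc + xfn))) :
    (xac ≤ xswitch ∧ xswitch ≤ xan) ↔
      (ω ^ 2 * (xan - xac) * (xac + xan - 2 * xfn) ≤ van ^ 2 - vac ^ 2 ∧
       van ^ 2 - vac ^ 2 ≤ ω ^ 2 * (xan - xac) * (xac + xan - 2 * xfc)) := by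
  have hd : (0:ℝ) < xfn - xfc := by linarith
  have hω2 : (0:ℝ) < ω ^ 2 := by positivity
  have hp : (0:ℝ) < 2 * (xfn - xfc) * ω ^ 2 := by positivity
  have k1 : xswitch - xac =
      ((van ^ 2 - vac ^ 2) - ω ^ 2 * (xan - xac) * (xac + xan - 2 * xfn)) /
        (2 * (xfn - xfc) * ω ^ 2) := by
    rw [hswitch, hC]
    field_simp
    ring
  have k2 : xan - xswitch =
      (ω ^ 2 * (xan - xac) * (xac + xan - 2 * xfc) - (van ^ 2 - vac ^ 2)) /
        (2 * (xfn - xfc) * ω ^ 2) := by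
    rw [hswitch, hC]
    field_simp
    ring
  constructor
  · rintro ⟨h1, h2⟩
    have h1' : (0:ℝ) ≤ xswitch - xac := by linarith
    have h2' : (0:ℝ) ≤ xan - xswitch := by linarith
    rw [k1, le_div_iff₀ hp] at h1'
    rw [k2, le_div_iff₀ hp] at h2'
    constructor <;> nlinarith
  · rintro ⟨h1, h2⟩
    have h1' : (0:ℝ) ≤ xswitch - xac := by
      rw [k1]; apply div_nonneg _ hp.le; linarith
    have h2' : (0:ℝ) ≤ xan - xswitch := by
      rw [k2]; apply div_nonneg _ hp.le; linarith
    constructor <;> linarith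
end

section
/- (Safety criterion for straight walking.) Let ω > 0 and d > 0, and consider a straight walking step in which the apexes lie over the feet: x_apex,c = x_foot,c, x_apex,n = x_foot,n, and d = x_apex,n − x_apex,c. Let x_switch = (1/2)·(C/(x_foot,n − x_foot,c) + (x_foot,c + x_foot,n)) with C = (x_apex,c − x_foot,c)² − (x_apex,n − x_foot,n)² + (v_apex,n² − v_apex,c²)/ω². Then the switching position satisfies x_apex,c ≤ x_switch ≤ x_apex,n if and only if the two consecutive apex velocities satisfy −ω²d² ≤ v_apex,n² − v_apex,c² ≤ ω²d². -/
/-- Safety criterion for straight walking: with apexes over the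
feet and step length `d`, the switching position lies between the apexes iff
`−ω²d² ≤ v_apex,n² − v_apex,c² ≤ ω²d²`. -/
theorem straight_walking_safety_criterion
    (ω d xfc xfn xac xan vac van xswitch C : ℝ) (hω : 0 < ω) (hd : 0 < d)
    (hac : xac = xfc) (han : xan = xfn)
    (hstep : d = xan - xac)
    (hC : C = (xac - xfc) ^ 2 - (xan - xfn) ^ 2 + (van ^ 2 - vac ^ 2) / ω ^ 2)
    (hswitch : xswitch = (1 / 2) * (C / (xfn - xfc) + (xfc + xfn))) :
    (xac ≤ xswitch ∧ xswitch ≤ xan) ↔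
      (-(ω ^ 2 * d ^ 2) ≤ van ^ 2 - vac ^ 2 ∧ van ^ 2 - vac ^ 2 ≤ ω ^ 2 * d ^ 2) := by
  have hω2 : (0:ℝ) < ω ^ 2 := by positivity
  have hfn : xfn - xfc = d := by rw [← hac, ← han]; linarith
  have hx : xswitch = (1 / 2) * ((van ^ 2 - vac ^ 2) / (ω ^ 2 * d) + (xfc + xfn)) := by
    rw [hswitch, hC, hac, han, hfn]; ring_nf
  have key : ∀ y : ℝ, y / (ω ^ 2 * d) ≤ d ↔ y ≤ ω ^ 2 * d ^ 2 := by
    intro y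
    rw [div_le_iff₀ (by positivity)]
    constructor <;> intro h <;> nlinarith
  have key2 : ∀ y : ℝ, -d ≤ y / (ω ^ 2 * d) ↔ -(ω ^ 2 * d ^ 2) ≤ y := by
    intro y
    rw [le_div_iff₀ (by positivity)]
    constructor <;> intro h <;> nlinarith
  constructor
  · rintro ⟨h1, h2⟩
    rw [hx] at h1 h2
    constructor
    · rw [← key2]; rw [hac] at h1; nlinarith [hfn]
    · rw [← key]; rw [han] at h2; nlinarith [hfn]
  · rintro ⟨h1, h2⟩
    rw [← key2 (van ^ 2 - vac ^ 2)] at h1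
    rw [← key (van ^ 2 - vac ^ 2)] at h2
    rw [hx]
    constructor
    · rw [hac]; nlinarith [hfn]
    · rw [han]; nlinarith [hfn]
end

section
/- (Steering velocity constraint, first corollary.) Let ω > 0, d > 0, Δy₂ > 0 and 0 < Δθ < π/2, and consider a steering step whose state expressed in the new local frame after the turn has current position offset x_apex,c − x_foot,c = Δy₂·sin Δθ, current sagittal velocity v_apex,c·cos Δθ, next apex over the next foot (x_apex,n = x_foot,n), and step length d = x_apex,n − x_apex,c. Let x_switch be the velocity-continuity switching position x_switch = (1/2)·(C/(x_foot,n − x_foot,c) + (x_foot,c + x_foot,n)) with C = (x_apex,c − x_foot,c)² − (x_apex,n − x_foot,n)² + (v_apex,n² − (v_apex,c·cos Δθ)²)/ω². If x_apex,c ≤ x_switch ≤ x_apex,n, then −ω²d² ≤ v_apex,n² − (v_apex,c·cos Δθ)² ≤ ω²(d² + 2·Δy₂·d·sin Δθ). -/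
/-- Steering velocity constraint, first corollary: for a
steering step whose post-turn sagittal offset is `Δy₂·sin Δθ`, feasibility of
the switching position implies
`−ω²d² ≤ v_apex,n² − (v_apex,c·cos Δθ)² ≤ ω²(d² + 2Δy₂·d·sin Δθ)`. -/
theorem steering_velocity_constraint_first
    (ω d Δy₂ Δθ xfc xfn xac xan vac van xswitch C : ℝ)
    (hω : 0 < ω) (hd : 0 < d) (hΔy₂ : 0 < Δy₂)
    (hθ0 : 0 < Δθ) (hθ1 : Δθ < Real.pi / 2)
    (hoff : xac - xfc = Δy₂ * Real.sin Δθ)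
    (han : xan = xfn)
    (hstep : d = xan - xac)
    (hC : C = (xac - xfc) ^ 2 - (xan - xfn) ^ 2 +
          (van ^ 2 - (vac * Real.cos Δθ) ^ 2) / ω ^ 2)
    (hswitch : xswitch = (1 / 2) * (C / (xfn - xfc) + (xfc + xfn)))
    (hfeas : xac ≤ xswitch ∧ xswitch ≤ xan) :
    -(ω ^ 2 * d ^ 2) ≤ van ^ 2 - (vac * Real.cos Δθ) ^ 2 ∧
    van ^ 2 - (vac * Real.cos Δθ) ^ 2 ≤
      ω ^ 2 * (d ^ 2 + 2 * Δy₂ * d * Real.sin Δθ) := by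
  obtain ⟨h1, h2⟩ := hfeas
  have hsin : 0 < Real.sin Δθ :=
    Real.sin_pos_of_pos_of_lt_pi hθ0 (lt_trans hθ1 (by linarith [Real.pi_pos]))
  have hs : 0 < Δy₂ * Real.sin Δθ := mul_pos hΔy₂ hsin
  have hden : xfn - xfc = d + Δy₂ * Real.sin Δθ := by
    have := hoff; have := hstep; rw [han] at hstep; linarith
  have hdenpos : 0 < xfn - xfc := by linarith
  have hω2 : (0:ℝ) < ω ^ 2 := by positivity
  set V := van ^ 2 - (vac * Real.cos Δθ) ^ 2 with hV
  -- lower bound from h1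
  have hl : (2 * xac - xfc - xfn) * (xfn - xfc) ≤ C := by
    rw [hswitch] at h1
    have : 2 * xac - xfc - xfn ≤ C / (xfn - xfc) := by linarith
    exact (le_div_iff₀ hdenpos).mp this
  have hu : C ≤ (2 * xan - xfc - xfn) * (xfn - xfc) := by
    rw [hswitch] at h2
    have : C / (xfn - xfc) ≤ 2 * xan - xfc - xfn := by linarith
    exact (div_le_iff₀ hdenpos).mp this
  have hCC : C * ω ^ 2 = ((xac - xfc) ^ 2 - (xan - xfn) ^ 2) * ω ^ 2 + V := by
    rw [hC]; field_simp
  have hxfc : xfc = xac - Δy₂ * Real.sin Δθ := by linarith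
  have hxfn : xfn = xac + d := by rw [han] at hstep; linarith
  have hl' : (Δy₂ * Real.sin Δθ) ^ 2 - d ^ 2 ≤ C := by
    rw [hxfc, hxfn] at hl; nlinarith [hl]
  have hu' : C ≤ (d + Δy₂ * Real.sin Δθ) ^ 2 := by
    rw [hxfc, hxfn] at hu; nlinarith [hu]
  have hCC' : C * ω ^ 2 = (Δy₂ * Real.sin Δθ) ^ 2 * ω ^ 2 + V := by
    rw [hCC, hxfc, han]; ring
  constructor
  · linarith [mul_le_mul_of_nonneg_right hl' (le_of_lt hω2), hCC']
  · linarith [mul_le_mul_of_nonneg_right hu' (le_of_lt hω2), hCC']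
end

section
/- (Steering velocity constraint, second corollary.) Let ω > 0, Δy₂ > 0, 0 < Δθ < π/2, and d > Δy₂·sin Δθ, and consider a steering step whose state expressed in the new local frame after the turn has current position offset x_apex,c − x_foot,c = −Δy₂·sin Δθ, current sagittal velocity v_apex,c·cos Δθ, next apex over the next foot (x_apex,n = x_foot,n), and step length d = x_apex,n − x_apex,c. Let x_switch be the velocity-continuity switching position x_switch = (1/2)·(C/(x_foot,n − x_foot,c) + (x_foot,c + x_foot,n)) with C = (x_apex,c − x_foot,c)² − (x_apex,n − x_foot,n)² + (v_apex,n² − (v_apex,c·cos Δθ)²)/ω². If x_apex,c ≤ x_switch ≤ x_apex,n, then −ω²d² ≤ v_apex,n² − (v_apex,c·cos Δθ)² ≤ ω²(d² − 2·Δy₂·d·sin Δθ). -/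
/-- Steering velocity constraint, second corollary: for a
steering step whose post-turn sagittal offset is `−Δy₂·sin Δθ`, feasibility of
the switching position implies
`−ω²d² ≤ v_apex,n² − (v_apex,c·cos Δθ)² ≤ ω²(d² − 2Δy₂·d·sin Δθ)`. -/
theorem steering_velocity_constraint_second
    (ω d Δy₂ Δθ xfc xfn xac xan vac van xswitch C : ℝ)
    (hω : 0 < ω) (hΔy₂ : 0 < Δy₂)
    (hθ0 : 0 < Δθ) (hθ1 : Δθ < Real.pi / 2)
    (hd : Δy₂ * Real.sin Δθ < d)
    (hoff : xac - xfc = -(Δy₂ * Real.sin Δθ))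
    (han : xan = xfn)
    (hstep : d = xan - xac)
    (hC : C = (xac - xfc) ^ 2 - (xan - xfn) ^ 2 +
          (van ^ 2 - (vac * Real.cos Δθ) ^ 2) / ω ^ 2)
    (hswitch : xswitch = (1 / 2) * (C / (xfn - xfc) + (xfc + xfn)))
    (hfeas : xac ≤ xswitch ∧ xswitch ≤ xan) :
    -(ω ^ 2 * d ^ 2) ≤ van ^ 2 - (vac * Real.cos Δθ) ^ 2 ∧
    van ^ 2 - (vac * Real.cos Δθ) ^ 2 ≤
      ω ^ 2 * (d ^ 2 - 2 * Δy₂ * d * Real.sin Δθ) := by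
  set s := Δy₂ * Real.sin Δθ with hs
  set V := van ^ 2 - (vac * Real.cos Δθ) ^ 2 with hV
  have hfn : xfn - xfc = d - s := by
    have := hoff; rw [han] at hstep; linarith
  have hds : 0 < d - s := by linarith
  have hω2 : (0:ℝ) < ω ^ 2 := by positivity
  have hCval : C = s ^ 2 + V / ω ^ 2 := by
    rw [hC, hoff, han]; ring
  obtain ⟨h1, h2⟩ := hfeas
  rw [hswitch] at h1 h2
  -- lower bound: xac ≤ xswitch
  have h1' : (2 * xac - (xfc + xfn)) * (xfn - xfc) ≤ C := by
    have hle : 2 * xac - (xfc + xfn) ≤ C / (xfn - xfc) := by linarith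
    calc (2 * xac - (xfc + xfn)) * (xfn - xfc)
        ≤ C / (xfn - xfc) * (xfn - xfc) := by
          exact mul_le_mul_of_nonneg_right hle (by rw [hfn]; linarith)
      _ = C := div_mul_cancel₀ _ (by rw [hfn]; linarith)
  have h2' : C ≤ (2 * xan - (xfc + xfn)) * (xfn - xfc) := by
    have hle : C / (xfn - xfc) ≤ 2 * xan - (xfc + xfn) := by linarith
    calc C = C / (xfn - xfc) * (xfn - xfc) :=
            (div_mul_cancel₀ _ (by rw [hfn]; linarith)).symm
      _ ≤ (2 * xan - (xfc + xfn)) * (xfn - xfc) :=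
          mul_le_mul_of_nonneg_right hle (by rw [hfn]; linarith)
  -- express things in terms of d, s
  have hxac : 2 * xac - (xfc + xfn) = -(s + d) := by
    rw [han] at hstep; linarith
  have hxan : 2 * xan - (xfc + xfn) = d - s := by
    rw [han] at hstep; linarith
  rw [hxac, hfn] at h1'
  rw [hxan, hfn] at h2'
  rw [hCval] at h1' h2'
  have hVd : V / ω ^ 2 * ω ^ 2 = V := div_mul_cancel₀ _ (ne_of_gt hω2)
  constructor
  · nlinarith [mul_le_mul_of_nonneg_right h1' (le_of_lt hω2)]
  · have hg : ω ^ 2 * (d ^ 2 - 2 * Δy₂ * d * Real.sin Δθ) = ω ^ 2 * (d ^ 2 - 2 * s * d) := by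
      rw [hs]; ring
    rw [hg]
    nlinarith [mul_le_mul_of_nonneg_right h2' (le_of_lt hω2)]
end

section
/- (Recovery foot placement.) Let ω > 0, let x_s, ẋ_s ∈ ℝ with ẋ_s > 0, and let the next foot be placed at x_foot,n ≥ x_s with ẋ_s > ω(x_foot,n − x_s) (the post-switch state lies above the asymptote of the new pendulum). Let y : ℝ → ℝ be the PIPM solution with y''(t) = ω²(y(t) − x_foot,n), y(0) = x_s, y'(0) = ẋ_s. Then there exists a unique t* ≥ 0 with y(t*) = x_foot,n, y'(t) > 0 for all t, and the CoM crosses the new stance foot with velocity y'(t*) = √(ẋ_s² − ω²(x_foot,n − x_s)²). In particular, choosing x_foot,n = x_s + (1/ω)·√(ẋ_s² − v²) for any 0 < v ≤ ẋ_s yields crossing (apex) velocity exactly v. -/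
/-- Recovery foot placement: if the post-switch state lies
above the asymptote of the new pendulum, the CoM keeps moving forward and
crosses the new stance foot exactly once, at velocity
`√(ẋ_s² − ω²(x_foot,n − x_s)²)`; in particular the capture-point-like choice
`x_foot,n = x_s + (1/ω)·√(ẋ_s² − v²)` yields crossing (apex) velocity `v`. -/
theorem recovery_foot_placement
    (ω xs xds xfn : ℝ) (hω : 0 < ω) (hxds : 0 < xds)
    (hfn : xs ≤ xfn) (hasym : ω * (xfn - xs) < xds)
    (y : ℝ → ℝ)
    (hdiff : ∀ t, DifferentiableAt ℝ y t)
    (hdiff' : ∀ t, DifferentiableAt ℝ (deriv y) t)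
    (hode : ∀ t, deriv (deriv y) t = ω ^ 2 * (y t - xfn))
    (h0 : y 0 = xs) (h0' : deriv y 0 = xds) :
    ∃ tstar : ℝ, 0 ≤ tstar ∧ y tstar = xfn ∧
      (∀ t : ℝ, 0 ≤ t → y t = xfn → t = tstar) ∧
      (∀ t : ℝ, 0 < deriv y t) ∧
      deriv y tstar = Real.sqrt (xds ^ 2 - ω ^ 2 * (xfn - xs) ^ 2) ∧
      (∀ v : ℝ, 0 < v → v ≤ xds →
        xfn = xs + (1 / ω) * Real.sqrt (xds ^ 2 - v ^ 2) →
        deriv y tstar = v) := by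
  have hω' : ω ≠ 0 := ne_of_gt hω
  set a : ℝ := (xds - ω * (xfn - xs)) / 2 with ha_def
  set b : ℝ := (xds + ω * (xfn - xs)) / 2 with hb_def
  have hwfs : 0 ≤ ω * (xfn - xs) := mul_nonneg hω.le (by linarith)
  have ha : 0 < a := by rw [ha_def]; linarith
  have hb : 0 < b := by rw [hb_def]; linarith
  have hab : a ≤ b := by rw [ha_def, hb_def]; linarith
  -- key ODE integration
  have keyA : ∀ t, deriv y t + ω * (y t - xfn) = 2 * a * Real.exp (ω * t) := by
    have hF : ∀ t, HasDerivAt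
        (fun t => (deriv y t + ω * (y t - xfn)) * Real.exp (-(ω * t))) 0 t := by
      intro t
      have h1 : HasDerivAt (fun t => deriv y t + ω * (y t - xfn))
          (deriv (deriv y) t + ω * deriv y t) t :=
        (hdiff' t).hasDerivAt.add (((hdiff t).hasDerivAt.sub_const xfn).const_mul ω)
      have h2 : HasDerivAt (fun t : ℝ => Real.exp (-(ω * t)))
          (Real.exp (-(ω * t)) * (-ω)) t := by
        have h3 : HasDerivAt (fun t : ℝ => -(ω * t)) (-ω) t := by
          have h4 := ((hasDerivAt_id t).const_mul ω).neg
          simp only [mul_one] at h4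
          exact h4
        exact h3.exp
      have := h1.mul h2
      exact this.congr_deriv (by rw [hode t]; ring)
    have hconst : ∀ t : ℝ,
        (deriv y t + ω * (y t - xfn)) * Real.exp (-(ω * t)) =
        (deriv y 0 + ω * (y 0 - xfn)) * Real.exp (-(ω * 0)) :=
      fun t => is_const_of_deriv_eq_zero (fun x => (hF x).differentiableAt)
        (fun x => (hF x).deriv) t 0
    intro t
    have h := hconst t
    rw [h0, h0'] at h
    have hne : Real.exp (-(ω * t)) ≠ 0 := Real.exp_ne_zero _
    have hinv : Real.exp (-(ω * t)) * Real.exp (ω * t) = 1 := by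
      rw [← Real.exp_add]; simp
    have : (deriv y t + ω * (y t - xfn)) * Real.exp (-(ω * t)) * Real.exp (ω * t)
        = (xds + ω * (xs - xfn)) * Real.exp (-(ω * 0)) * Real.exp (ω * t) := by
      rw [h]
    rw [mul_assoc, hinv, mul_one] at this
    simp only [mul_zero, neg_zero, Real.exp_zero, mul_one] at this
    rw [this, ha_def]; ring
  have keyB : ∀ t, deriv y t - ω * (y t - xfn) = 2 * b * Real.exp (-(ω * t)) := by
    have hF : ∀ t, HasDerivAt
        (fun t => (deriv y t - ω * (y t - xfn)) * Real.exp (ω * t)) 0 t := by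
      intro t
      have h1 : HasDerivAt (fun t => deriv y t - ω * (y t - xfn))
          (deriv (deriv y) t - ω * deriv y t) t :=
        (hdiff' t).hasDerivAt.sub (((hdiff t).hasDerivAt.sub_const xfn).const_mul ω)
      have h2 : HasDerivAt (fun t : ℝ => Real.exp (ω * t))
          (Real.exp (ω * t) * ω) t := by
        have h3 : HasDerivAt (fun t : ℝ => ω * t) ω t := by
          simpa using (hasDerivAt_id t).const_mul ω
        exact h3.exp
      have := h1.mul h2
      exact this.congr_deriv (by rw [hode t]; ring)
    have hconst : ∀ t : ℝ,
        (deriv y t - ω * (y t - xfn)) * Real.exp (ω * t) =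
        (deriv y 0 - ω * (y 0 - xfn)) * Real.exp (ω * 0) :=
      fun t => is_const_of_deriv_eq_zero (fun x => (hF x).differentiableAt)
        (fun x => (hF x).deriv) t 0
    intro t
    have h := hconst t
    rw [h0, h0'] at h
    have hinv : Real.exp (ω * t) * Real.exp (-(ω * t)) = 1 := by
      rw [← Real.exp_add]; simp
    have : (deriv y t - ω * (y t - xfn)) * Real.exp (ω * t) * Real.exp (-(ω * t))
        = (xds - ω * (xs - xfn)) * Real.exp (ω * 0) * Real.exp (-(ω * t)) := by
      rw [h]
    rw [mul_assoc, hinv, mul_one] at this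
    simp only [mul_zero, Real.exp_zero, mul_one] at this
    rw [this, hb_def]; ring
  have yd : ∀ t, deriv y t = a * Real.exp (ω * t) + b * Real.exp (-(ω * t)) := by
    intro t; have h1 := keyA t; have h2 := keyB t; linarith
  have yx : ∀ t, ω * (y t - xfn) = a * Real.exp (ω * t) - b * Real.exp (-(ω * t)) := by
    intro t; have h1 := keyA t; have h2 := keyB t; linarith
  have hpos : ∀ t, 0 < deriv y t := by
    intro t; rw [yd t]; positivity
  have hmono : StrictMono y := by
    apply strictMono_of_deriv_pos hpos
  set tstar : ℝ := Real.log (b / a) / (2 * ω) with ht_def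
  have hlog : 0 ≤ Real.log (b / a) := Real.log_nonneg ((one_le_div ha).2 hab)
  have htnn : 0 ≤ tstar := by
    rw [ht_def]; positivity
  set E : ℝ := Real.exp (ω * tstar) with hE_def
  have hEpos : 0 < E := Real.exp_pos _
  have hE2 : a * E ^ 2 = b := by
    have : E ^ 2 = Real.exp (2 * (ω * tstar)) := by
      rw [hE_def, sq, ← Real.exp_add]; ring_nf
    rw [this]
    have h2t : 2 * (ω * tstar) = Real.log (b / a) := by
      rw [ht_def]; field_simp
    rw [h2t, Real.exp_log (by positivity)]
    field_simp
  have hEinv : Real.exp (-(ω * tstar)) = E⁻¹ := by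
    rw [hE_def, ← Real.exp_neg]
  have hyst : y tstar = xfn := by
    have h := yx tstar
    rw [hEinv] at h
    have hz : a * E - b * E⁻¹ = 0 := by
      field_simp
      linear_combination hE2
    rw [hz] at h
    rcases mul_eq_zero.mp h with h' | h'
    · exact absurd h' hω'
    · linarith
  have hcross : b * E⁻¹ = a * E := by
    field_simp
    linear_combination -hE2
  have h4ab : xds ^ 2 - ω ^ 2 * (xfn - xs) ^ 2 = 4 * (a * b) := by
    rw [ha_def, hb_def]; ring
  have hsq : (a * E + b * E⁻¹) ^ 2 = xds ^ 2 - ω ^ 2 * (xfn - xs) ^ 2 := by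
    rw [hcross, h4ab]
    linear_combination 4 * a * hE2
  have hmain : deriv y tstar = Real.sqrt (xds ^ 2 - ω ^ 2 * (xfn - xs) ^ 2) := by
    rw [yd tstar, hEinv, ← hsq, Real.sqrt_sq (by positivity)]
  refine ⟨tstar, htnn, hyst, ?_, hpos, hmain, ?_⟩
  · intro t _ hyt
    exact hmono.injective (hyt.trans hyst.symm)
  · intro v hv hvx hxfn
    have hvsq : 0 ≤ xds ^ 2 - v ^ 2 := by nlinarith
    have hws : ω * (xfn - xs) = Real.sqrt (xds ^ 2 - v ^ 2) := by
      rw [hxfn]; field_simp; ring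
    have h2 : ω ^ 2 * (xfn - xs) ^ 2 = xds ^ 2 - v ^ 2 := by
      have := hws
      calc ω ^ 2 * (xfn - xs) ^ 2 = (ω * (xfn - xs)) ^ 2 := by ring
        _ = Real.sqrt (xds ^ 2 - v ^ 2) ^ 2 := by rw [this]
        _ = xds ^ 2 - v ^ 2 := Real.sq_sqrt hvsq
    rw [hmain, h2]
    have : xds ^ 2 - (xds ^ 2 - v ^ 2) = v ^ 2 := by ring
    rw [this, Real.sqrt_sq hv.le]
end
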